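/- Let (η, ω) be a cosymplectic structure on a finite-dimensional real vector space V. Suppose K is a subspace with K ∩ K^⊥ = {0} and there exists R_K ∈ K with i(R_K)ω|_K = 0 and η(R_K) = 1. Then the restricted pair (η_K, ω_K) is a cosymplectic structure on K, i.e. the map ♭_{(η_K,ω_K)} : K → K*, u ↦ i(u)ω_K + η_K(u)η_K, is a linear isomorphism, and moreover ker ω_K = span{R_K} (so dim K is odd). -/

import Mathlib

variable {V : Type*} [AddCommGroup V] [Module ℝ V] [FiniteDimensional ℝ V]

/-- The `(ω,η)`-orthogonal complement of a subspace `K`: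
`K^⊥ = {v : ω(v,u) − η(v)η(u) = 0 for all u ∈ K}`. -/
def perp (ω : V →ₗ[ℝ] V →ₗ[ℝ] ℝ) (η : V →ₗ[ℝ] ℝ) (K : Submodule ℝ V) :
    Submodule ℝ V where
  carrier := {v | ∀ u ∈ K, ω v u = η v * η u}
  zero_mem' := by intro u hu; simp
  add_mem' := by
    intro a b ha hb u hu
    simp only [map_add, LinearMap.add_apply, ha u hu, hb u hu]
    ring
  smul_mem' := by
    intro c a ha u hu
    simp only [map_smul, LinearMap.smul_apply, smul_eq_mul, ha u hu]
    ring

/-- The map `♭_{(η,ω)} : V → V*`, `v ↦ i(v)ω + η(v)·η`. -/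
noncomputable def flatMap (ω : V →ₗ[ℝ] V →ₗ[ℝ] ℝ) (η : V →ₗ[ℝ] ℝ) :
    V →ₗ[ℝ] (V →ₗ[ℝ] ℝ) :=
  ω + η.smulRight η

/-- The wedge product of two linear forms: `(α∧β)(u,v) = α(u)β(v) − β(u)α(v)`. -/
noncomputable def wedge (α β : V →ₗ[ℝ] ℝ) : V →ₗ[ℝ] V →ₗ[ℝ] ℝ :=
  α.smulRight β - β.smulRight α

/-- If `K ∩ K^⊥ = {0}` and there is `R_K ∈ K` with `i(R_K)ω|_K = 0`, `η(R_K) = 1`,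
then `(η_K, ω_K)` is cosymplectic on `K`, `ker ω_K = span{R_K}`, and `dim K` is odd. -/
theorem stmt9 (ω : V →ₗ[ℝ] V →ₗ[ℝ] ℝ) (η : V →ₗ[ℝ] ℝ) (halt : ∀ v, ω v v = 0)
    (hbij : Function.Bijective (flatMap ω η)) (K : Submodule ℝ V)
    (hdisj : K ⊓ perp ω η K = ⊥)
    (RK : V) (hRK : RK ∈ K) (hRKω : ∀ u ∈ K, ω RK u = 0) (hRKη : η RK = 1) :
    Function.Bijective (flatMap (ω.compl₁₂ K.subtype K.subtype) (η.comp K.subtype)) ∧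
    LinearMap.ker (ω.compl₁₂ K.subtype K.subtype) =
      Submodule.span ℝ {(⟨RK, hRK⟩ : K)} ∧
    Odd (Module.finrank ℝ K) := by
  classical
  have hskew : ∀ a b, ω a b = - ω b a := by
    intro a b
    have h := halt (a + b)
    simp only [map_add, LinearMap.add_apply, halt a, halt b] at h
    linarith
  set ωK := ω.compl₁₂ K.subtype K.subtype with hωK
  set ηK := η.comp K.subtype with hηK
  set r : K := ⟨RK, hRK⟩ with hr
  have hF : ∀ (u w : K), flatMap ωK ηK u w = ω u.1 w.1 + η u.1 * η w.1 := by
    intro u w; simp [flatMap, ωK, ηK]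
  -- injectivity of the flat map on K
  have hinj : Function.Injective (flatMap ωK ηK) := by
    rw [← LinearMap.ker_eq_bot]
    rw [Submodule.eq_bot_iff]
    intro u hu
    rw [LinearMap.mem_ker] at hu
    have hall : ∀ w : K, ω u.1 w.1 + η u.1 * η w.1 = 0 := by
      intro w; rw [← hF u w, hu]; rfl
    have hηu : η u.1 = 0 := by
      have := hall r
      rw [hr] at this
      simp only [hRKη, mul_one] at this
      have h2 : ω u.1 RK = - ω RK u.1 := hskew _ _
      rw [hRKω u.1 u.2] at h2
      simp only [h2, neg_zero, zero_add] at this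
      exact this
    have hperp : u.1 ∈ perp ω η K := by
      intro w hw
      have := hall ⟨w, hw⟩
      rw [hηu] at this
      simp only [zero_mul, add_zero] at this
      rw [this, hηu, zero_mul]
    have : u.1 ∈ K ⊓ perp ω η K := ⟨u.2, hperp⟩
    rw [hdisj] at this
    exact Subtype.ext this
  have hbijK : Function.Bijective (flatMap ωK ηK) := by
    refine ⟨hinj, ?_⟩
    have hd : Module.finrank ℝ K = Module.finrank ℝ (K →ₗ[ℝ] ℝ) :=
      (Subspace.dual_finrank_eq (K := ℝ) (V := K)).symm
    exact (LinearMap.injective_iff_surjective_of_finrank_eq_finrank hd).mp hinj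
  -- the kernel of ωK
  have hrker : ωK r = 0 := by
    ext w
    simpa [ωK, hr] using hRKω w.1 w.2
  have hker : LinearMap.ker ωK = Submodule.span ℝ {r} := by
    apply le_antisymm
    · intro u hu
      rw [LinearMap.mem_ker] at hu
      have h0 : flatMap ωK ηK (u - η u.1 • r) = 0 := by
        ext w
        simp only [LinearMap.zero_apply]
        rw [hF]
        have hωu : ∀ w : K, ω u.1 w.1 = 0 := by
          intro w
          have : ωK u w = 0 := by rw [hu]; simp
          simpa [ωK] using this
        simp only [Submodule.coe_sub, Submodule.coe_smul, hr, map_sub, map_smul,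
          LinearMap.sub_apply, LinearMap.smul_apply, smul_eq_mul]
        rw [hωu w, hRKω w.1 w.2, hRKη]
        ring
      have := hinj (a₁ := u - η u.1 • r) (a₂ := 0) (by rw [h0, map_zero])
      have hu' : u = η u.1 • r := sub_eq_zero.mp this
      rw [hu']
      exact Submodule.smul_mem _ _ (Submodule.mem_span_singleton_self r)
    · rw [Submodule.span_singleton_le_iff_mem, LinearMap.mem_ker]
      exact hrker
  refine ⟨hbijK, hker, ?_⟩
  -- oddness
  set K₀ := LinearMap.ker ηK with hK₀
  have hηr : ηK r = 1 := by simp [ηK, hr, hRKη]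
  have hrange : LinearMap.range ηK = ⊤ := by
    rw [LinearMap.range_eq_top]
    intro x
    exact ⟨x • r, by rw [map_smul, hηr, smul_eq_mul, mul_one]⟩
  have hdim : Module.finrank ℝ K = Module.finrank ℝ K₀ + 1 := by
    have h := LinearMap.finrank_range_add_finrank_ker ηK
    rw [hrange] at h
    simp only [finrank_top, Module.finrank_self] at h
    rw [← hK₀] at h
    omega
  -- the restriction of ω to K₀ is a nondegenerate alternating form
  set ω₀ := ωK.compl₁₂ K₀.subtype K₀.subtype with hω₀
  have hsep : ω₀.SeparatingLeft := by
    rw [LinearMap.separatingLeft_iff_ker_eq_bot, Submodule.eq_bot_iff]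
    intro u hu
    rw [LinearMap.mem_ker] at hu
    have hωu : ∀ w : K₀, ω u.1.1 w.1.1 = 0 := by
      intro w
      have : ω₀ u w = 0 := by rw [hu]; simp
      simpa [ω₀, ωK] using this
    have hηu : η u.1.1 = 0 := u.2
    have h0 : flatMap ωK ηK u.1 = 0 := by
      ext w
      simp only [LinearMap.zero_apply]
      rw [hF]
      have hw0 : (w - ηK w • r : K) ∈ K₀ := by
        rw [hK₀, LinearMap.mem_ker, map_sub, map_smul, hηr, smul_eq_mul, mul_one, sub_self]
      have h1 := hωu ⟨w - ηK w • r, hw0⟩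
      have h2 : ω u.1.1 (w.1 - ηK w • RK) = 0 := h1
      have h3 : ω u.1.1 RK = 0 := by
        rw [hskew]; rw [hRKω u.1.1 u.1.2]; ring
      rw [map_sub, map_smul] at h2
      rw [h3] at h2
      simp only [smul_eq_mul, mul_zero, smul_zero, sub_zero] at h2
      rw [h2, hηu, zero_mul, add_zero]
    have := hinj (a₁ := u.1) (a₂ := 0) (by rw [h0, map_zero])
    exact Subtype.ext this
  have heven : Even (Module.finrank ℝ K₀) := by
    by_contra hodd
    rw [Nat.not_even_iff_odd] at hodd
    set b := Module.finBasis ℝ K₀ with hb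
    obtain ⟨A, hA⟩ : ∃ A, A = LinearMap.toMatrix₂ b b ω₀ := ⟨_, rfl⟩
    have hdet : A.det ≠ 0 := by
      rw [hA]; exact (LinearMap.separatingLeft_iff_det_ne_zero b).mp hsep
    have hMskew : A.transpose = -A := by
      ext i j
      simp only [Matrix.transpose_apply, Matrix.neg_apply, hA, LinearMap.toMatrix₂_apply]
      have : ω₀ (b j) (b i) = - ω₀ (b i) (b j) := by
        simp only [hω₀, LinearMap.compl₁₂_apply, hωK, Submodule.coe_subtype]
        exact hskew _ _
      exact this
    have h1 : A.det = (-1) ^ Module.finrank ℝ K₀ * A.det := by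
      conv_lhs => rw [← Matrix.det_transpose, hMskew]
      rw [Matrix.det_neg, Fintype.card_fin]
    rw [hodd.neg_one_pow, neg_one_mul] at h1
    exact hdet (self_eq_neg.mp h1)
  rw [hdim]
  exact Even.add_one heven
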